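/- Let G be a finite group with a symmetric generating set S, and let Γ = C(G,S) be the associated Cayley graph with combinatorial Laplacian Δ = |S|·Id − A. Then the smallest nonzero eigenvalue λ₁ of Δ satisfies λ₁ ≥ 1/(|S|·diam(Γ)²), where diam(Γ) is the diameter of the Cayley graph. -/

import Mathlib

open Matrix Finset

private lemma aux_cs (k a b : ℝ) (hk : 1 ≤ k) :
    (a + b) ^ 2 ≤ (1 + k) * a ^ 2 + (1 + 1 / k) * b ^ 2 := by
  have hk0 : 0 < k := by linarith
  have h1 : k * (1 / k) = 1 := mul_one_div_cancel hk0.ne'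
  nlinarith [sq_nonneg (k * a - b), sq_nonneg (a - b), mul_pos hk0 hk0]

/-- Diaconis–Saloff-Coste bound: for a Cayley graph `C(G,S)` of a finite group `G`
with symmetric generating set `S`, every nonzero eigenvalue of the combinatorial
Laplacian `Δ = |S|·Id − A` is at least `1/(|S|·diam²)`. -/
theorem stmt0 {G : Type*} [Group G] [Fintype G] [DecidableEq G]
    (S : Finset G) (hsym : ∀ s ∈ S, s⁻¹ ∈ S)
    (hgen : Subgroup.closure (S : Set G) = ⊤)
    (D : ℕ)
    (hD : IsLeast {d : ℕ | ∀ g : G, ∃ l : List G,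
      l.length ≤ d ∧ (∀ x ∈ l, x ∈ S) ∧ l.prod = g} D)
    (Δ : Matrix G G ℝ)
    (hΔ : Δ = (S.card : ℝ) • (1 : Matrix G G ℝ) -
      Matrix.of fun x y => ((S.filter fun s => s * x = y).card : ℝ))
    (lam : ℝ) (hlam : lam ≠ 0)
    (v : G → ℝ) (hv : v ≠ 0) (heig : Δ.mulVec v = lam • v) :
    lam ≥ 1 / ((S.card : ℝ) * (D : ℝ) ^ 2) := by
  subst hΔ
  -- pointwise eigenvalue equation
  have hx : ∀ x : G, (S.card : ℝ) * v x - ∑ s ∈ S, v (s * x) = lam * v x := by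
    intro x
    have h := congrFun heig x
    have h1 : (((S.card : ℝ) • (1 : Matrix G G ℝ) -
        Matrix.of fun x y => ((S.filter fun s => s * x = y).card : ℝ)).mulVec v) x
        = (S.card : ℝ) * v x - ∑ y, ((S.filter fun s => s * x = y).card : ℝ) * v y := by
      simp [Matrix.mulVec, dotProduct, Matrix.of_apply, Matrix.sub_apply,
        Matrix.smul_apply, Matrix.one_apply, sub_mul, Finset.sum_sub_distrib,
        ite_mul, mul_ite, mul_one, mul_zero, zero_mul, Finset.sum_ite_eq,
        smul_eq_mul]
    have h2 : ∑ y, ((S.filter fun s => s * x = y).card : ℝ) * v y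
        = ∑ s ∈ S, v (s * x) := by
      have key : ∀ y : G, ((S.filter fun s => s * x = y).card : ℝ) * v y
          = ∑ s ∈ S, if s * x = y then v y else 0 := by
        intro y
        rw [Finset.card_filter]
        push_cast
        rw [Finset.sum_mul]
        exact Finset.sum_congr rfl (fun s _ => by split <;> simp)
      rw [Finset.sum_congr rfl fun y _ => key y, Finset.sum_comm]
      exact Finset.sum_congr rfl fun s _ => by simp
    have h3 := h1.symm.trans h
    rw [h2] at h3
    simpa using h3
  -- reindexing lemmas
  have hre : ∀ (g : G) (f : G → ℝ), ∑ x, f (g * x) = ∑ x, f x := by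
    intro g f
    exact Fintype.sum_equiv (Equiv.mulLeft g) _ _ (fun x => by simp)
  have hre' : ∀ (g : G) (f : G → ℝ), ∑ x, f (x * g) = ∑ x, f x := by
    intro g f
    exact Fintype.sum_equiv (Equiv.mulRight g) _ _ (fun x => by simp)
  -- trivial-group case
  by_cases htriv : ∀ g : G, g = 1
  · obtain ⟨x0, hx0⟩ := Function.ne_iff.mp hv
    have e1 : ∑ s ∈ S, v (s * x0) = (S.card : ℝ) * v x0 := by
      have key : ∀ s ∈ S, v (s * x0) = v x0 := fun s _ => by rw [htriv s, one_mul]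
      rw [Finset.sum_congr rfl key, Finset.sum_const, nsmul_eq_mul, mul_comm]
    have e2 := hx x0
    rw [e1, sub_self] at e2
    rcases mul_eq_zero.mp e2.symm with h | h
    · exact absurd h hlam
    · simp at hx0; exact absurd h hx0
  push_neg at htriv
  obtain ⟨g0, hg0⟩ := htriv
  obtain ⟨l0, hl0len, hl0mem, hl0prod⟩ := hD.1 g0
  have hl0ne : l0 ≠ [] := by
    rintro rfl
    simp at hl0prod
    exact hg0 hl0prod.symm
  have hD1 : 1 ≤ D := le_trans (List.length_pos_iff.mpr hl0ne) hl0len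
  have hS1 : 1 ≤ S.card := by
    obtain ⟨s, hs⟩ := List.exists_mem_of_ne_nil l0 hl0ne
    exact Finset.card_pos.mpr ⟨s, hl0mem s hs⟩
  -- sum of v is zero
  have hsum0 : ∑ x, v x = 0 := by
    have e1 : ∑ x, ((S.card : ℝ) * v x - ∑ s ∈ S, v (s * x)) = ∑ x, lam * v x :=
      Finset.sum_congr rfl fun x _ => hx x
    rw [Finset.sum_sub_distrib, ← Finset.mul_sum, ← Finset.mul_sum, Finset.sum_comm] at e1
    have e2 : ∑ s ∈ S, ∑ x, v (s * x) = (S.card : ℝ) * ∑ x, v x := by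
      rw [Finset.sum_congr rfl fun s _ => hre s v]
      simp [mul_comm]
    rw [e2, sub_self] at e1
    exact (mul_eq_zero.mp e1.symm).resolve_left hlam
  -- positivity of ∑ v²
  obtain ⟨x0, hx0⟩ := Function.ne_iff.mp hv
  have hx0' : v x0 ≠ 0 := by simpa using hx0
  have hvv : 0 < ∑ x, v x ^ 2 :=
    lt_of_lt_of_le (pow_pos (abs_pos.mpr hx0') 2 |>.trans_eq (by rw [sq_abs]))
      (Finset.single_le_sum (f := fun x => v x ^ 2) (fun i _ => sq_nonneg _) (mem_univ x0))
  -- the energy Q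
  set Q : ℝ := ∑ s ∈ S, ∑ x, (v (s * x) - v x) ^ 2 with hQdef
  have hQnonneg : 0 ≤ Q :=
    Finset.sum_nonneg fun s _ => Finset.sum_nonneg fun x _ => sq_nonneg _
  have hedge : ∀ s ∈ S, ∑ x, (v (s * x) - v x) ^ 2 ≤ Q := fun s hs =>
    Finset.single_le_sum (f := fun s => ∑ x, (v (s * x) - v x) ^ 2)
      (fun i _ => Finset.sum_nonneg fun x _ => sq_nonneg _) hs
  -- Q = 2 λ ∑ v²
  have eT : (S.card : ℝ) * (∑ x, v x ^ 2) - (∑ s ∈ S, ∑ x, v (s * x) * v x)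
      = lam * ∑ x, v x ^ 2 := by
    have e1 : ∑ x, ((S.card : ℝ) * v x - ∑ s ∈ S, v (s * x)) * v x
        = ∑ x, (lam * v x) * v x :=
      Finset.sum_congr rfl fun x _ => by rw [hx x]
    simp only [sub_mul, Finset.sum_sub_distrib, Finset.sum_mul] at e1
    have e2 : ∑ x, (S.card : ℝ) * v x * v x = (S.card : ℝ) * ∑ x, v x ^ 2 := by
      rw [Finset.mul_sum]; exact Finset.sum_congr rfl fun x _ => by ring
    have e3 : ∑ x, lam * v x * v x = lam * ∑ x, v x ^ 2 := by
      rw [Finset.mul_sum]; exact Finset.sum_congr rfl fun x _ => by ring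
    rw [e2, e3, Finset.sum_comm] at e1
    exact e1
  have hQ : Q = 2 * lam * ∑ x, v x ^ 2 := by
    have e1 : ∀ s : G, ∑ x, (v (s * x) - v x) ^ 2
        = (∑ x, v x ^ 2) + (∑ x, v x ^ 2) - 2 * ∑ x, v (s * x) * v x := by
      intro s
      have h2 : ∑ x, v (s * x) ^ 2 = ∑ x, v x ^ 2 := hre s (fun x => v x ^ 2)
      calc ∑ x, (v (s * x) - v x) ^ 2
          = ∑ x, (v (s * x) ^ 2 + v x ^ 2 - 2 * (v (s * x) * v x)) :=
            Finset.sum_congr rfl fun x _ => by ring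
        _ = (∑ x, v x ^ 2) + (∑ x, v x ^ 2) - 2 * ∑ x, v (s * x) * v x := by
            rw [Finset.sum_sub_distrib, Finset.sum_add_distrib, ← Finset.mul_sum, h2]
    rw [hQdef, Finset.sum_congr rfl fun s _ => e1 s]
    rw [Finset.sum_sub_distrib, Finset.sum_add_distrib, Finset.sum_const, ← Finset.mul_sum]
    have : ((S.card : ℝ) * (∑ x, v x ^ 2)) + ((S.card : ℝ) * (∑ x, v x ^ 2))
        - 2 * ∑ s ∈ S, ∑ x, v (s * x) * v x = 2 * lam * ∑ x, v x ^ 2 := by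
      linarith [eT]
    simpa [nsmul_eq_mul, two_mul, mul_add] using this
  -- path bound
  have path : ∀ l : List G, (∀ s ∈ l, s ∈ S) →
      ∑ x, (v (l.prod * x) - v x) ^ 2 ≤ (l.length : ℝ) ^ 2 * Q := by
    intro l
    induction l with
    | nil => intro _; simp
    | cons s t ih =>
      intro hm
      have hsS : s ∈ S := hm s List.mem_cons_self
      have htm : ∀ a ∈ t, a ∈ S := fun a ha => hm a (List.mem_cons_of_mem s ha)
      have hed : ∑ x, (v (s * x) - v x) ^ 2 ≤ Q := hedge s hsS
      rcases Nat.eq_zero_or_pos t.length with h0 | hpos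
      · obtain rfl : t = [] := List.length_eq_zero_iff.mp h0
        simp only [List.prod_cons, List.prod_nil, mul_one, List.length_cons,
          List.length_nil, Nat.zero_add, Nat.cast_one, one_pow, one_mul]
        exact hed
      · have hk1 : (1 : ℝ) ≤ (t.length : ℝ) := by exact_mod_cast hpos
        set k : ℝ := (t.length : ℝ) with hk
        have hk0 : 0 < k := by linarith
        have hpt : ∀ x : G, (v ((s :: t).prod * x) - v x) ^ 2 ≤
            (1 + k) * (v (s * (t.prod * x)) - v (t.prod * x)) ^ 2
            + (1 + 1 / k) * (v (t.prod * x) - v x) ^ 2 := by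
          intro x
          have hpr : (s :: t).prod * x = s * (t.prod * x) := by
            rw [List.prod_cons, mul_assoc]
          rw [hpr]
          have hcs := aux_cs k (v (s * (t.prod * x)) - v (t.prod * x))
            (v (t.prod * x) - v x) hk1
          calc (v (s * (t.prod * x)) - v x) ^ 2
              = ((v (s * (t.prod * x)) - v (t.prod * x)) + (v (t.prod * x) - v x)) ^ 2 := by
                ring
            _ ≤ _ := hcs
        have hsum : ∑ x, (v ((s :: t).prod * x) - v x) ^ 2 ≤
            (1 + k) * (∑ x, (v (s * (t.prod * x)) - v (t.prod * x)) ^ 2)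
            + (1 + 1 / k) * (∑ x, (v (t.prod * x) - v x) ^ 2) := by
          rw [Finset.mul_sum, Finset.mul_sum, ← Finset.sum_add_distrib]
          exact Finset.sum_le_sum fun x _ => hpt x
        have h1 : ∑ x, (v (s * (t.prod * x)) - v (t.prod * x)) ^ 2
            = ∑ x, (v (s * x) - v x) ^ 2 :=
          hre t.prod (fun u => (v (s * u) - v u) ^ 2)
        have h2 := ih htm
        have c1 : (0 : ℝ) ≤ 1 + k := by linarith
        have c2 : (0 : ℝ) ≤ 1 + 1 / k := by positivity
        calc ∑ x, (v ((s :: t).prod * x) - v x) ^ 2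
            ≤ (1 + k) * Q + (1 + 1 / k) * (k ^ 2 * Q) := by
              refine le_trans hsum (add_le_add ?_ ?_)
              · exact mul_le_mul_of_nonneg_left (h1 ▸ hed) c1
              · exact mul_le_mul_of_nonneg_left h2 c2
          _ = (k + 1) ^ 2 * Q := by field_simp; ring
          _ = ((s :: t).length : ℝ) ^ 2 * Q := by
              rw [List.length_cons]; push_cast; ring
  -- per-group-element bound
  have hPg : ∀ g : G, ∑ x, (v (g * x) - v x) ^ 2 ≤ (D : ℝ) ^ 2 * Q := by
    intro g
    obtain ⟨l, hlen, hmem, hprod⟩ := hD.1 g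
    have hp := path l hmem
    rw [hprod] at hp
    refine le_trans hp (mul_le_mul_of_nonneg_right ?_ hQnonneg)
    exact pow_le_pow_left₀ (by positivity) (by exact_mod_cast hlen) 2
  -- total sum identity
  have htot : ∑ g : G, ∑ x, (v (g * x) - v x) ^ 2
      = 2 * (Fintype.card G : ℝ) * ∑ x, v x ^ 2 := by
    rw [Finset.sum_comm]
    have e : ∀ x : G, ∑ g : G, (v (g * x) - v x) ^ 2 = ∑ y : G, (v y - v x) ^ 2 :=
      fun x => hre' x (fun y => (v y - v x) ^ 2)
    rw [Finset.sum_congr rfl fun x _ => e x]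
    have e2 : ∀ x : G, ∑ y : G, (v y - v x) ^ 2
        = (∑ y, v y ^ 2) - 2 * v x * (∑ y, v y) + (Fintype.card G : ℝ) * v x ^ 2 := by
      intro x
      calc ∑ y : G, (v y - v x) ^ 2
          = ∑ y : G, (v y ^ 2 - 2 * v x * v y + v x ^ 2) :=
            Finset.sum_congr rfl fun y _ => by ring
        _ = _ := by
            rw [Finset.sum_add_distrib, Finset.sum_sub_distrib, ← Finset.mul_sum,
              Finset.sum_const]
            simp [nsmul_eq_mul, Finset.card_univ, mul_comm]
    rw [Finset.sum_congr rfl fun x _ => e2 x, hsum0]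
    rw [Finset.sum_add_distrib, Finset.sum_sub_distrib, ← Finset.mul_sum,
      Finset.sum_const]
    simp only [mul_zero, sub_zero, Finset.card_univ, nsmul_eq_mul, Finset.sum_const]
    ring
  -- combine everything
  have hfin : 2 * (Fintype.card G : ℝ) * (∑ x, v x ^ 2)
      ≤ (Fintype.card G : ℝ) * ((D : ℝ) ^ 2 * Q) := by
    calc 2 * (Fintype.card G : ℝ) * (∑ x, v x ^ 2)
        = ∑ g : G, ∑ x, (v (g * x) - v x) ^ 2 := htot.symm
      _ ≤ ∑ _g : G, (D : ℝ) ^ 2 * Q := Finset.sum_le_sum fun g _ => hPg g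
      _ = (Fintype.card G : ℝ) * ((D : ℝ) ^ 2 * Q) := by
          simp [Finset.sum_const, Finset.card_univ, nsmul_eq_mul]
  rw [hQ] at hfin
  have hn : 0 < (Fintype.card G : ℝ) := by
    exact_mod_cast Fintype.card_pos
  have key : 1 ≤ (D : ℝ) ^ 2 * lam := by
    nlinarith [mul_pos hn hvv]
  have hDr : (1 : ℝ) ≤ (D : ℝ) := by exact_mod_cast hD1
  have hScr : (1 : ℝ) ≤ (S.card : ℝ) := by exact_mod_cast hS1
  have hD2pos : (0 : ℝ) < (D : ℝ) ^ 2 := by positivity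
  have hlam0 : 0 < lam := by nlinarith
  rw [ge_iff_le, div_le_iff₀ (by nlinarith)]
  nlinarith [mul_le_mul_of_nonneg_right hScr (le_of_lt (mul_pos hlam0 hD2pos))]
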